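/- The point p_f = (−3/4, 1/2) lies on the fold line {3x² + a = 0} of the nerve impulse model and is a saddle point of the desingularized vector field: the Jacobian of X̄ at p_f has one positive and one negative real eigenvalue. -/

import Mathlib

open ContinuousLinearMap in
/-- The point `p_f = (−3/4, 1/2)` lies on the fold line `{3x² + a = 0}` and is a saddle
point of the desingularized vector field of the nerve impulse model: the Jacobian
(`fderiv`) of `X̄` at `p_f` has one positive and one negative real eigenvalue. -/
theorem nerve_impulse_folded_saddle
    (Xbar : ℝ × ℝ → ℝ × ℝ)
    (hX : Xbar = fun p => (-2 * (3 * p.2 ^ 2 + p.1) * (p.1 + p.2),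
        1 + p.1 + 2 * (p.1 + p.2) * p.2)) :
    3 * (1/2 : ℝ) ^ 2 + (-3/4 : ℝ) = 0 ∧
    ∃ lam₁ lam₂ : ℝ, 0 < lam₁ ∧ lam₂ < 0 ∧
      Module.End.HasEigenvalue ((fderiv ℝ Xbar ((-3/4 : ℝ), (1/2 : ℝ))).toLinearMap) lam₁ ∧
      Module.End.HasEigenvalue ((fderiv ℝ Xbar ((-3/4 : ℝ), (1/2 : ℝ))).toLinearMap) lam₂ := by
  set p0 : ℝ × ℝ := ((-3/4 : ℝ), (1/2 : ℝ)) with hp0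
  set A : ℝ × ℝ →L[ℝ] ℝ × ℝ :=
    (((1/2 : ℝ) • fst ℝ ℝ ℝ + (3/2 : ℝ) • snd ℝ ℝ ℝ).prod
      ((2 : ℝ) • fst ℝ ℝ ℝ + (1/2 : ℝ) • snd ℝ ℝ ℝ)) with hA
  have h2 : HasFDerivAt (fun p : ℝ × ℝ => p.2) (snd ℝ ℝ ℝ) p0 := hasFDerivAt_snd
  have h1 : HasFDerivAt (fun p : ℝ × ℝ => p.1) (fst ℝ ℝ ℝ) p0 := hasFDerivAt_fst
  have hsq : HasFDerivAt (fun p : ℝ × ℝ => p.2 ^ 2)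
      (p0.2 • snd ℝ ℝ ℝ + p0.2 • snd ℝ ℝ ℝ) p0 := by
    convert! h2.mul h2 using 1
    funext p
    exact sq _
  have hu := ((hsq.const_mul (3:ℝ)).add h1).const_mul (-2 : ℝ)
  have hv := h1.add h2
  have hf1 := hu.mul hv
  have hf2 := ((h1.const_add (1:ℝ))).add ((hv.const_mul (2:ℝ)).mul h2)
  have htot := hf1.prodMk hf2
  have hAt : HasFDerivAt Xbar A p0 := by
    rw [hX]
    convert! htot using 1
    refine ContinuousLinearMap.ext fun h => Prod.ext ?_ ?_ <;>
      simp [hA, hp0] <;> ring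
  have hfd : fderiv ℝ Xbar p0 = A := hAt.fderiv
  refine ⟨by norm_num, (1 + 2 * Real.sqrt 3) / 2, (1 - 2 * Real.sqrt 3) / 2, ?_, ?_, ?_, ?_⟩
  · positivity
  · nlinarith [Real.sq_sqrt (by norm_num : (3:ℝ) ≥ 0), Real.sqrt_nonneg 3]
  · refine Module.End.hasEigenvalue_of_hasEigenvector
      (x := ((3 : ℝ), 2 * Real.sqrt 3)) ⟨Module.End.mem_eigenspace_iff.2 ?_, ?_⟩
    · have h3 : Real.sqrt 3 ^ 2 = 3 := Real.sq_sqrt (by norm_num)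
      rw [hfd]
      refine Prod.ext ?_ ?_ <;> simp [hA] <;> nlinarith [h3]
    · intro h
      have := congrArg Prod.fst h
      norm_num at this
  · refine Module.End.hasEigenvalue_of_hasEigenvector
      (x := ((3 : ℝ), -(2 * Real.sqrt 3))) ⟨Module.End.mem_eigenspace_iff.2 ?_, ?_⟩
    · have h3 : Real.sqrt 3 ^ 2 = 3 := Real.sq_sqrt (by norm_num)
      rw [hfd]
      refine Prod.ext ?_ ?_ <;> simp [hA] <;> nlinarith [h3]
    · intro h
      have := congrArg Prod.fst h
      norm_num at this
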